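/- With the definitions below, suppose m_tI > 0, m_req ≥ 0, Δv_sn(j) ≥ 0 for all j with Σ_{j=1}^{n+1} Δv_sn(j) > 0, Δv_tin(j) ≥ 0 and Δv_tout(j) ≥ 0 for all j. Let 0 < I1 < I2 be two servicer specific impulse values and assume α_AD(I1) > 0. Then α_AD(I1) < α_AD(I2); that is, the critical mass ratio α_AD, viewed as a function of the servicer specific impulse Isp_s, is strictly increasing on the region where it is positive. -/
import Mathlib


/-- The critical mass ratio `α_AD` between the non-cooperative Architecture A and the
fully cooperative depot Architecture D, viewed as a function of the servicer specific
impulse `Isp_s`, is strictly increasing on the region where it is positive. -/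
theorem stmt_12 (n : ℕ) (hn : 1 ≤ n)
    (g0 Isp_t m_tI m_req : ℝ)
    (hg0 : 0 < g0) (hIspt : 0 < Isp_t) (htI : 0 < m_tI) (hreq : 0 ≤ m_req)
    (Δv_sn Δv_tin Δv_tout : ℕ → ℝ)
    (hsn : ∀ j : ℕ, 1 ≤ j → j ≤ n + 1 → 0 ≤ Δv_sn j)
    (hsnpos : 0 < ∑ j ∈ Finset.Icc 1 (n + 1), Δv_sn j)
    (htin : ∀ j : ℕ, 1 ≤ j → j ≤ n → 0 ≤ Δv_tin j)
    (htout : ∀ j : ℕ, 1 ≤ j → j ≤ n → 0 ≤ Δv_tout j)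
    (αAD : ℝ → ℝ)
    (hα : ∀ Isp_s : ℝ, 0 < Isp_s → αAD Isp_s =
      (∑ j ∈ Finset.Icc 1 n,
        ((m_req / m_tI) *
            Real.exp ((∑ k ∈ Finset.Icc 1 j, Δv_sn k) / (Isp_s * g0)) -
          ((1 + m_req / m_tI) * Real.exp (Δv_tout j / (Isp_t * g0)) -
              Real.exp (-Δv_tin j / (Isp_t * g0))))) /
      (1 - Real.exp ((∑ j ∈ Finset.Icc 1 (n + 1), Δv_sn j) / (Isp_s * g0))))
    (I1 I2 : ℝ) (hI1 : 0 < I1) (hI12 : I1 < I2) (hαpos : 0 < αAD I1) :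
    αAD I1 < αAD I2 := by
  have hI2 : 0 < I2 := hI1.trans hI12
  set S := ∑ j ∈ Finset.Icc 1 (n + 1), Δv_sn j with hS
  set N : ℝ → ℝ := fun I => ∑ j ∈ Finset.Icc 1 n,
        ((m_req / m_tI) *
            Real.exp ((∑ k ∈ Finset.Icc 1 j, Δv_sn k) / (I * g0)) -
          ((1 + m_req / m_tI) * Real.exp (Δv_tout j / (Isp_t * g0)) -
              Real.exp (-Δv_tin j / (Isp_t * g0)))) with hN
  set D : ℝ → ℝ := fun I => 1 - Real.exp (S / (I * g0)) with hD
  have hα1 : αAD I1 = N I1 / D I1 := hα I1 hI1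
  have hα2 : αAD I2 = N I2 / D I2 := hα I2 hI2
  have hIg1 : 0 < I1 * g0 := mul_pos hI1 hg0
  have hIg2 : 0 < I2 * g0 := mul_pos hI2 hg0
  have hIg12 : I1 * g0 < I2 * g0 := by nlinarith
  have hD1 : D I1 < 0 := by
    have h : 1 < Real.exp (S / (I1 * g0)) := by
      rw [← Real.exp_zero]
      exact Real.exp_lt_exp.2 (div_pos hsnpos hIg1)
    simp only [hD]; linarith
  have hD12 : D I1 < D I2 := by
    have : Real.exp (S / (I2 * g0)) < Real.exp (S / (I1 * g0)) := by
      apply Real.exp_lt_exp.2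
      exact div_lt_div_of_pos_left hsnpos hIg1 hIg12
    simp only [hD]; linarith
  have hD2 : D I2 < 0 := by
    have h : 1 < Real.exp (S / (I2 * g0)) := by
      rw [← Real.exp_zero]
      exact Real.exp_lt_exp.2 (div_pos hsnpos hIg2)
    simp only [hD]; linarith
  have hN21 : N I2 ≤ N I1 := by
    apply Finset.sum_le_sum
    intro j hj
    simp only [Finset.mem_Icc] at hj
    have hs : 0 ≤ ∑ k ∈ Finset.Icc 1 j, Δv_sn k := by
      apply Finset.sum_nonneg
      intro k hk
      simp only [Finset.mem_Icc] at hk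
      exact hsn k hk.1 (hk.2.trans (hj.2.trans (Nat.le_succ n)))
    have : Real.exp ((∑ k ∈ Finset.Icc 1 j, Δv_sn k) / (I2 * g0)) ≤
        Real.exp ((∑ k ∈ Finset.Icc 1 j, Δv_sn k) / (I1 * g0)) := by
      apply Real.exp_le_exp.2
      exact div_le_div_of_nonneg_left hs hIg1 hIg12.le -- check name/order
    have hr : 0 ≤ m_req / m_tI := div_nonneg hreq htI.le
    nlinarith
  have hN1 : N I1 < 0 := by
    rw [hα1] at hαpos
    by_contra h
    push_neg at h
    have : N I1 / D I1 ≤ 0 := div_nonpos_of_nonneg_of_nonpos h hD1.le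
    linarith
  rw [hα1, hα2]
  have key : (-(N I1)) / (-(D I1)) < (-(N I2)) / (-(D I2)) := by
    have h1 : (-(N I1)) / (-(D I1)) < (-(N I1)) / (-(D I2)) :=
      div_lt_div_of_pos_left (by linarith) (by linarith) (by linarith)
    have h2 : (-(N I1)) / (-(D I2)) ≤ (-(N I2)) / (-(D I2)) :=
      (div_le_div_iff_of_pos_right (by linarith)).2 (by linarith)
    linarith
  simpa [neg_div_neg_eq] using key
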